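/- There exists a group G such that the map T : G³ → G³, T(x,y,z) = (x, xyx⁻¹, z⁻¹), does not satisfy the tetrahedron equation; that is, there are elements (x,y,z,r,s,t) ∈ G⁶ at which T^{123} ∘ T^{145} ∘ T^{246} ∘ T^{356} and T^{356} ∘ T^{246} ∘ T^{145} ∘ T^{123} take different values. Likewise, there exists a group G such that the map T'(x,y,z) = (x⁻¹, y, yzy⁻¹) does not satisfy the tetrahedron equation. -/
import Mathlib


/-- `T` acting on factors 1,2,3 of the sixfold Cartesian product `D⁶`. -/
def tetra123 {D : Type*} (T : D × D × D → D × D × D) :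
    D × D × D × D × D × D → D × D × D × D × D × D :=
  fun q =>
    match q with
    | (x, y, z, r, s, t) =>
      ((T (x, y, z)).1, (T (x, y, z)).2.1, (T (x, y, z)).2.2, r, s, t)

/-- `T` acting on factors 1,4,5 of the sixfold Cartesian product `D⁶`. -/
def tetra145 {D : Type*} (T : D × D × D → D × D × D) :
    D × D × D × D × D × D → D × D × D × D × D × D :=
  fun q =>
    match q with
    | (x, y, z, r, s, t) =>
      ((T (x, r, s)).1, y, z, (T (x, r, s)).2.1, (T (x, r, s)).2.2, t)

/-- `T` acting on factors 2,4,6 of the sixfold Cartesian product `D⁶`. -/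
def tetra246 {D : Type*} (T : D × D × D → D × D × D) :
    D × D × D × D × D × D → D × D × D × D × D × D :=
  fun q =>
    match q with
    | (x, y, z, r, s, t) =>
      (x, (T (y, r, t)).1, z, (T (y, r, t)).2.1, s, (T (y, r, t)).2.2)

/-- `T` acting on factors 3,5,6 of the sixfold Cartesian product `D⁶`. -/
def tetra356 {D : Type*} (T : D × D × D → D × D × D) :
    D × D × D × D × D × D → D × D × D × D × D × D :=
  fun q =>
    match q with
    | (x, y, z, r, s, t) =>
      (x, y, (T (z, s, t)).1, r, (T (z, s, t)).2.1, (T (z, s, t)).2.2)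

/-- The (Zamolodchikov) tetrahedron equation for a map `T : D³ → D³`. -/
def IsTetrahedronMap {D : Type*} (T : D × D × D → D × D × D) : Prop :=
  tetra123 T ∘ tetra145 T ∘ tetra246 T ∘ tetra356 T =
    tetra356 T ∘ tetra246 T ∘ tetra145 T ∘ tetra123 T

abbrev Paux13 := Equiv.Perm (Fin 3)
def caux13 : Paux13 := finRotate 3
def swaux13 : Paux13 := Equiv.swap 0 2

theorem stmt_13 :
    (∃ (G : Type) (_ : Group G),
      ¬ IsTetrahedronMap (fun p : G × G × G => (p.1, p.1 * p.2.1 * p.1⁻¹, p.2.2⁻¹))) ∧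
    (∃ (G : Type) (_ : Group G),
      ¬ IsTetrahedronMap (fun p : G × G × G => (p.1⁻¹, p.2.1, p.2.1 * p.2.2 * p.2.1⁻¹))) := by
  constructor
  · exact ⟨Paux13, inferInstance, fun h => by
      have := congrFun h (1, 1, caux13, 1, swaux13, 1)
      simp only [IsTetrahedronMap, Function.comp, tetra123, tetra145, tetra246, tetra356] at this
      have h2 := congrArg (fun q : Paux13×Paux13×Paux13×Paux13×Paux13×Paux13 => q.2.2.2.2.1 0) this
      revert h2
      decide⟩
  · exact ⟨Paux13, inferInstance, fun h => by
      have := congrFun h (1, caux13, swaux13, 1, 1, 1)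
      simp only [IsTetrahedronMap, Function.comp, tetra123, tetra145, tetra246, tetra356] at this
      have h3 := congrArg (fun q : Paux13×Paux13×Paux13×Paux13×Paux13×Paux13 => q.2.2.1 0) this
      revert h3
      decide⟩
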